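/- Let μ ≠ 0. The generating functions of θ_n(z;K) and θ_n(z−μ^{−1}; K̃), where K̃ = (k_2+μ^{−3}, k_3+μ^{−5}, …), are related by Σ_{n≥0} θ_n(z;K)λⁿ = sqrt((1+μ^{−1}λ)/(1−μ^{−1}λ)) · Σ_{n≥0} θ_n(z−μ^{−1};K̃)λⁿ, as formal power series in λ. -/

import Mathlib

open Polynomial

/-- `IsThetaFamily K θ` formalizes the generating-function identity
Σ_{n≥0} θ_n(z;K) λⁿ = exp(zλ − Σ_{j≥2} k_j λ^{2j−1}/(2j−1)) for polynomials
θ_n ∈ ℂ[z]. In characteristic zero, F = exp(S) (with S(0) = 0) is equivalent to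
F(0) = 1 together with F' = S'·F; taking coefficients of λⁿ in the latter gives
exactly the recurrence below, since S'(λ) = z − Σ_{j≥2} k_j λ^{2j−2}. -/
def IsThetaFamily (K : ℕ → ℂ) (θ : ℕ → Polynomial ℂ) : Prop :=
  θ 0 = 1 ∧ ∀ n : ℕ, C ((n : ℂ) + 1) * θ (n + 1) =
    X * θ n
      - ∑ j ∈ Finset.Icc 2 (n + 1),
          if 2 * j ≤ n + 2 then C (K j) * θ (n - (2 * j - 2)) else 0

noncomputable section ThetaAux

abbrev PS := PowerSeries (Polynomial ℂ)

def Qs (K : ℕ → ℂ) : PS :=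
  PowerSeries.mk fun m => if m % 2 = 0 ∧ 2 ≤ m then Polynomial.C (K (m / 2 + 1)) else 0

def Rs (c : ℂ) : PS :=
  PowerSeries.mk fun m => if m % 2 = 0 ∧ 2 ≤ m then Polynomial.C (c ^ (m + 1)) else 0

def Gs (g : ℕ → ℂ) : PS := PowerSeries.mk fun n => Polynomial.C (g n)

def Us (c : ℂ) : PS := 1 - PowerSeries.C (Polynomial.C (c ^ 2)) * PowerSeries.X ^ 2

lemma sum_conv (f : ℕ → ℂ) (θ : ℕ → Polynomial ℂ) (n : ℕ) :
    ∑ i ∈ Finset.range (n + 1),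
      (if i % 2 = 0 ∧ 2 ≤ i then Polynomial.C (f (i / 2 + 1)) else 0) * θ (n - i) =
    ∑ j ∈ Finset.Icc 2 (n + 1),
      if 2 * j ≤ n + 2 then Polynomial.C (f j) * θ (n - (2 * j - 2)) else 0 := by
  have l1 : ∀ i ∈ Finset.range (n+1),
      (if i % 2 = 0 ∧ 2 ≤ i then Polynomial.C (f (i / 2 + 1)) else 0) * θ (n - i)
      = if i % 2 = 0 ∧ 2 ≤ i then Polynomial.C (f (i / 2 + 1)) * θ (n - i) else 0 := by
    intros; split_ifs <;> simp
  rw [Finset.sum_congr rfl l1, ← Finset.sum_filter, ← Finset.sum_filter]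
  refine Finset.sum_nbij' (fun i => i / 2 + 1) (fun j => 2 * j - 2) ?_ ?_ ?_ ?_ ?_
  · intro a ha
    simp only [Finset.mem_filter, Finset.mem_range, Finset.mem_Icc] at ha ⊢
    omega
  · intro a ha
    simp only [Finset.mem_filter, Finset.mem_range, Finset.mem_Icc] at ha ⊢
    omega
  · intro a ha
    simp only [Finset.mem_filter, Finset.mem_range] at ha
    omega
  · intro a ha
    simp only [Finset.mem_filter, Finset.mem_Icc] at ha
    omega
  · intro a ha
    simp only [Finset.mem_filter, Finset.mem_range] at ha
    have e : 2 * (a / 2 + 1) - 2 = a := by omega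
    rw [e]

lemma coeff_derivativeFun' (f : PS) (n : ℕ) :
    PowerSeries.coeff n (PowerSeries.derivativeFun f) = PowerSeries.coeff (n + 1) f * (n + 1) :=
  PowerSeries.coeff_derivative f n

lemma ode_of (K : ℕ → ℂ) (θ : ℕ → Polynomial ℂ) (h : IsThetaFamily K θ) :
    PowerSeries.derivativeFun (PowerSeries.mk fun n => θ n)
      = (PowerSeries.C Polynomial.X - Qs K) * PowerSeries.mk fun n => θ n := by
  refine PowerSeries.ext fun n => ?_
  rw [coeff_derivativeFun', sub_mul, map_sub, PowerSeries.coeff_C_mul,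
    PowerSeries.coeff_mk, PowerSeries.coeff_mul,
    Finset.Nat.sum_antidiagonal_eq_sum_range_succ_mk]
  simp only [Qs, PowerSeries.coeff_mk]
  rw [sum_conv, ← h.2 n, mul_comm]
  congr 1
  push_cast [Polynomial.C_add, Polynomial.C_1, Polynomial.C_eq_natCast]
  norm_num

lemma coeff_Us_mul (c : ℂ) (φ : PS) (n : ℕ) :
    PowerSeries.coeff n (Us c * φ)
      = PowerSeries.coeff n φ
        - Polynomial.C (c ^ 2) * (if 2 ≤ n then PowerSeries.coeff (n - 2) φ else 0) := by
  rw [Us, sub_mul, one_mul, map_sub, mul_assoc, PowerSeries.coeff_C_mul,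
    PowerSeries.coeff_X_pow_mul']

lemma G_ode (c : ℂ) (g : ℕ → ℂ) (hg0 : g 0 = 1) (hg1 : g 1 = c)
    (hg : ∀ n : ℕ, ((n : ℂ) + 2) * g (n + 2) = c * g (n + 1) + c ^ 2 * n * g n) :
    Us c * PowerSeries.derivativeFun (Gs g)
      = PowerSeries.C (Polynomial.C c) * Gs g := by
  refine PowerSeries.ext fun n => ?_
  rw [coeff_Us_mul, PowerSeries.coeff_C_mul]
  simp only [Gs, coeff_derivativeFun', PowerSeries.coeff_mk]
  have key : ((n : ℂ) + 1) * g (n + 1)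
      - c ^ 2 * (if 2 ≤ n then (((n - 2 : ℕ) : ℂ) + 1) * g (n - 2 + 1) else 0)
      = c * g n := by
    match n with
    | 0 => simp [hg1, hg0]
    | 1 =>
      have h1 := hg 0
      norm_num at h1 ⊢
      linear_combination h1
    | (m + 2) =>
      have h1 := hg (m + 1)
      rw [if_pos (by omega : 2 ≤ m + 2)]
      have e2 : m + 2 - 2 = m := by omega
      rw [e2]
      push_cast at h1 ⊢
      linear_combination h1
  calc Polynomial.C (g (n + 1)) * ((n : ℕ) + 1 : Polynomial ℂ)
        - Polynomial.C (c ^ 2) * (if 2 ≤ n then Polynomial.C (g (n - 2 + 1)) * ((n - 2 : ℕ) + 1 : Polynomial ℂ) else 0)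
      = Polynomial.C (((n : ℂ) + 1) * g (n + 1)
          - c ^ 2 * (if 2 ≤ n then (((n - 2 : ℕ) : ℂ) + 1) * g (n - 2 + 1) else 0)) := by
        split_ifs with hn <;>
          · push_cast [map_sub, map_mul, map_add, map_one, map_zero, Polynomial.C_eq_natCast]
            ring
      _ = Polynomial.C (c * g n) := by rw [key]
      _ = Polynomial.C c * Polynomial.C (g n) := by rw [map_mul]

lemma Us_mul_R (c : ℂ) :
    Us c * (PowerSeries.C (Polynomial.C c) + Rs c)
      = PowerSeries.C (Polynomial.C c) := by
  refine PowerSeries.ext fun n => ?_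
  rw [coeff_Us_mul]
  simp only [map_add, PowerSeries.coeff_C, Rs, PowerSeries.coeff_mk]
  match n with
  | 0 => norm_num
  | 1 => norm_num
  | (m + 2) =>
    rw [if_pos (by omega : 2 ≤ m + 2)]
    have e : m + 2 - 2 = m := by omega
    rw [e, if_neg (by omega : ¬ m + 2 = 0), zero_add,
      show (m + 2) % 2 = m % 2 from Nat.add_mod_right m 2]
    split_ifs <;>
      first
        | omega
        | (subst_vars; rw [add_zero, ← map_mul, ← map_sub, Polynomial.C_eq_zero]; ring)
        | (rw [zero_add, ← map_mul, ← map_sub, Polynomial.C_eq_zero]; ring)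
        | simp

lemma Us_ne_zero (c : ℂ) : Us c ≠ 0 := by
  intro hc
  have h1 : PowerSeries.constantCoeff (Us c) = 1 := by
    simp [Us, map_sub, map_mul, map_pow]
  rw [hc] at h1
  simp at h1

lemma map_derivativeFun (f : Polynomial ℂ →+* Polynomial ℂ) (φ : PS) :
    PowerSeries.map f (PowerSeries.derivativeFun φ)
      = PowerSeries.derivativeFun (PowerSeries.map f φ) := by
  refine PowerSeries.ext fun n => ?_
  rw [PowerSeries.coeff_map, coeff_derivativeFun', coeff_derivativeFun',
    PowerSeries.coeff_map, map_mul, map_add, map_natCast, map_one]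

lemma map_Qs (c : ℂ) (K : ℕ → ℂ) :
    PowerSeries.map (Polynomial.compRingHom (Polynomial.X - Polynomial.C c))
        (Qs fun j => K j + c ^ (2 * j - 1))
      = Qs K + Rs c := by
  refine PowerSeries.ext fun m => ?_
  rw [PowerSeries.coeff_map]
  simp only [Qs, Rs, PowerSeries.coeff_mk, map_add, PowerSeries.coeff_mk]
  split_ifs with hm
  · rw [Polynomial.coe_compRingHom_apply, Polynomial.add_comp, Polynomial.C_comp,
      Polynomial.C_comp]
    congr 3
    omega
  · simp [Polynomial.coe_compRingHom_apply]

lemma ode_unique (P F H : PS) (hF : PowerSeries.derivativeFun F = P * F)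
    (hH : PowerSeries.derivativeFun H = P * H)
    (h0 : PowerSeries.coeff 0 F = PowerSeries.coeff 0 H) : F = H := by
  refine PowerSeries.ext fun n => ?_
  induction n using Nat.strong_induction_on with
  | _ n ih =>
    match n with
    | 0 => exact h0
    | (n + 1) =>
      have e1 : PowerSeries.coeff n (P * F) = PowerSeries.coeff n (P * H) := by
        rw [PowerSeries.coeff_mul, PowerSeries.coeff_mul]
        refine Finset.sum_congr rfl fun p hp => ?_
        rw [Finset.HasAntidiagonal.mem_antidiagonal] at hp
        rw [ih p.2 (by omega)]
      have e2 := congrArg (PowerSeries.coeff n) hF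
      have e3 := congrArg (PowerSeries.coeff n) hH
      rw [coeff_derivativeFun'] at e2 e3
      have e4 : PowerSeries.coeff (n + 1) F * ((n : Polynomial ℂ) + 1)
          = PowerSeries.coeff (n + 1) H * ((n : Polynomial ℂ) + 1) := by
        rw [e2, e3, e1]
      have hne : ((n : Polynomial ℂ) + 1) ≠ 0 := by
        exact_mod_cast Nat.cast_add_one_ne_zero (R := Polynomial ℂ) n
      exact mul_right_cancel₀ hne e4

end ThetaAux

/-- With K̃_j = k_j + μ^{1−2j}, the generating functions are related by
Σ θ_n(z;K)λⁿ = sqrt((1+μ⁻¹λ)/(1−μ⁻¹λ)) · Σ θ_n(z−μ⁻¹;K̃)λⁿ.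
Here g_n are the Taylor coefficients of sqrt((1+cx)/(1−cx)) = exp(artanh(cx)),
c = μ⁻¹, characterized by g₀ = 1, g₁ = c and (1−c²x²)G' = cG, and the identity
is stated as the equality of the n-th coefficients (a Cauchy product). -/
theorem theta_shift (μ : ℂ) (hμ : μ ≠ 0) (K : ℕ → ℂ)
    (θ θt : ℕ → Polynomial ℂ) (g : ℕ → ℂ)
    (h : IsThetaFamily K θ)
    (ht : IsThetaFamily (fun j => K j + (μ⁻¹) ^ (2 * j - 1)) θt)
    (hg0 : g 0 = 1) (hg1 : g 1 = μ⁻¹)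
    (hg : ∀ n : ℕ, ((n : ℂ) + 2) * g (n + 2) = μ⁻¹ * g (n + 1) + μ⁻¹ ^ 2 * n * g n) :
    ∀ m : ℕ, θ m = ∑ i ∈ Finset.range (m + 1),
      C (g i) * ((θt (m - i)).comp (X - C μ⁻¹)) := by
  set c : ℂ := μ⁻¹ with hc
  set f : Polynomial ℂ →+* Polynomial ℂ := Polynomial.compRingHom (Polynomial.X - Polynomial.C c)
    with hf
  set F : PS := PowerSeries.mk fun n => θ n with hFdef
  set T : PS := PowerSeries.map f (PowerSeries.mk fun n => θt n) with hTdef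
  set G : PS := Gs g with hGdef
  -- ODE for F
  have hF : PowerSeries.derivativeFun F
      = (PowerSeries.C Polynomial.X - Qs K) * F := ode_of K θ h
  -- ODE for T
  have hT : PowerSeries.derivativeFun T
      = (PowerSeries.C (Polynomial.X - Polynomial.C c) - Qs K - Rs c) * T := by
    have h1 := ode_of _ θt ht
    have h2 := congrArg (PowerSeries.map f) h1
    rw [map_derivativeFun] at h2
    rw [hTdef, h2, map_mul, map_sub, PowerSeries.map_C, map_Qs]
    have hfX : f Polynomial.X = Polynomial.X - Polynomial.C c := by
      rw [hf, Polynomial.coe_compRingHom_apply, Polynomial.X_comp]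
    rw [hfX]
    ring
  -- ODE for G
  have hG : PowerSeries.derivativeFun G
      = (PowerSeries.C (Polynomial.C c) + Rs c) * G := by
    apply mul_left_cancel₀ (Us_ne_zero c)
    rw [← mul_assoc, Us_mul_R c]
    exact G_ode c g hg0 hg1 hg
  -- ODE for G * T
  have hGT : PowerSeries.derivativeFun (G * T)
      = (PowerSeries.C Polynomial.X - Qs K) * (G * T) := by
    rw [PowerSeries.derivativeFun_mul, smul_eq_mul, smul_eq_mul, hG, hT, map_sub]
    ring
  -- constant coefficients agree
  have h0 : PowerSeries.coeff 0 F = PowerSeries.coeff 0 (G * T) := by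
    rw [PowerSeries.coeff_zero_eq_constantCoeff, map_mul]
    rw [hFdef, hTdef, hGdef]
    rw [← PowerSeries.coeff_zero_eq_constantCoeff, PowerSeries.coeff_map]
    simp [Gs, PowerSeries.coeff_mk, h.1, ht.1, hg0, hf, Polynomial.coe_compRingHom_apply]
  have hmain : F = G * T :=
    ode_unique _ F (G * T) hF hGT h0
  intro m
  have := congrArg (PowerSeries.coeff m) hmain
  rw [PowerSeries.coeff_mul, Finset.Nat.sum_antidiagonal_eq_sum_range_succ_mk] at this
  simp only [hFdef, hGdef, hTdef, Gs, PowerSeries.coeff_mk, PowerSeries.coeff_map,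
    PowerSeries.coeff_mk, hf, Polynomial.coe_compRingHom_apply] at this
  exact this
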